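/- In ZF: Let X be a dense subspace of a topological space T and f a continuous map from X into a compact Hausdorff space Y. Then f extends to a continuous map from T to Y if and only if there exists a closed base F of Y, stable under finite intersections, such that cl_T f⁻¹(A) ∩ cl_T f⁻¹(B) = ∅ for each pair A, B of disjoint members of F. -/

import Mathlib

universe u

open Set Filter Topology


lemma aux_inter {Y : Type u} {F : Set (Set Y)}
    (hFi : ∀ A ∈ F, ∀ B ∈ F, A ∩ B ∈ F) {ι : Type*} (g : ι → Set Y) :
    ∀ s : Finset ι, s.Nonempty → (∀ i ∈ s, g i ∈ F) → (⋂ i ∈ s, g i) ∈ F := by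
  classical
  intro s
  induction s using Finset.cons_induction with
  | empty => intro h; exact absurd h (by simp)
  | cons a t ha ih =>
    intro _ hmem
    rcases Finset.eq_empty_or_nonempty t with rfl | htne
    · simpa using hmem a (by simp)
    · have : (⋂ b ∈ Finset.cons a t ha, g b) = g a ∩ ⋂ b ∈ t, g b := by
        simp [Finset.cons_eq_insert]
      rw [this]
      exact hFi _ (hmem a (by simp)) _
        (ih htne fun i hi => hmem i (by simp [hi]))

/-- From a closed base stable under finite intersections in a compact Hausdorff
space, distinct points can be separated by disjoint base members that are
neighborhoods of the respective points. -/
lemma aux_sep {Y : Type u} [TopologicalSpace Y] [CompactSpace Y] [T2Space Y]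
    {F : Set (Set Y)} (hFc : ∀ A ∈ F, IsClosed A)
    (hFb : ∀ A : Set Y, IsClosed A → ∀ y ∉ A, ∃ B ∈ F, y ∉ B ∧ A ⊆ B)
    (hFi : ∀ A ∈ F, ∀ B ∈ F, A ∩ B ∈ F)
    {z y : Y} (hzy : z ≠ y) :
    ∃ A ∈ F, ∃ B ∈ F, z ∈ interior A ∧ y ∈ interior B ∧ Disjoint A B := by
  obtain ⟨U, V, hU, hV, hzU, hyV, hUV⟩ := t2_separation hzy
  obtain ⟨B, hBF, hzB, hUB⟩ := hFb Uᶜ hU.isClosed_compl z (by simpa)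
  have hVB : V ⊆ B := (Set.subset_compl_iff_disjoint_left.2 hUV).trans hUB
  have hyB : y ∈ interior B := interior_maximal hVB hV hyV
  -- for each b ∈ B find a base member which is a neighborhood of z missing b
  have key : ∀ b : B, ∃ E ∈ F, z ∈ interior E ∧ (b : Y) ∉ E := by
    rintro ⟨b, hb⟩
    have hzb : z ≠ b := fun h => hzB (h ▸ hb)
    obtain ⟨Ub, Vb, hUb, hVb, hzUb, hbVb, hd⟩ := t2_separation hzb
    obtain ⟨E, hEF, hbE, hE⟩ := hFb Vbᶜ hVb.isClosed_compl b (by simpa)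
    refine ⟨E, hEF, interior_maximal
      ((Set.subset_compl_iff_disjoint_right.2 hd).trans hE) hUb hzUb, hbE⟩
  choose E hEF hEint hEnot using key
  have hBcpt : IsCompact B := (hFc B hBF).isCompact
  have hcover : B ⊆ ⋃ b : B, (E b)ᶜ := fun b hb =>
    Set.mem_iUnion.2 ⟨⟨b, hb⟩, hEnot ⟨b, hb⟩⟩
  obtain ⟨s, hs⟩ := hBcpt.elim_finite_subcover (fun b : B => (E b)ᶜ)
    (fun b => (hFc _ (hEF b)).isOpen_compl) hcover
  have hsne : s.Nonempty := by
    rcases Finset.eq_empty_or_nonempty s with rfl | h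
    · exfalso
      have := hs (interior_subset hyB)
      simp at this
    · exact h
  refine ⟨⋂ b ∈ s, E b, aux_inter hFi E s hsne fun b _ => hEF b, B, hBF, ?_, hyB, ?_⟩
  · exact interior_maximal
      (Set.iInter₂_mono fun b _ => interior_subset)
      (isOpen_biInter_finset fun b _ => isOpen_interior)
      (Set.mem_iInter₂.2 fun b _ => hEint b)
  · rw [Set.disjoint_left]
    intro x hxA hxB
    obtain ⟨b, hb⟩ := Set.mem_iUnion.1 (hs hxB)
    simp only [Set.mem_iUnion, exists_prop] at hb
    exact hb.2 (Set.mem_iInter₂.1 hxA b hb.1)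

/-- Taimanov-type extension theorem (Blefko–Steiner form): a continuous map
from a dense subspace `X` of `T` into a compact Hausdorff space `Y` extends
continuously over `T` iff there is a closed base `F` of `Y`, stable under
finite intersections, such that preimages of disjoint members of `F` have
disjoint closures in `T`. -/
theorem stmt_14 {T Y : Type u} [TopologicalSpace T] [TopologicalSpace Y]
    [CompactSpace Y] [T2Space Y] (X : Set T) (hX : Dense X)
    (f : ↥X → Y) (hf : Continuous f) :
    (∃ g : T → Y, Continuous g ∧ ∀ x : ↥X, g ↑x = f x) ↔
      ∃ F : Set (Set Y),
        (∀ A ∈ F, IsClosed A) ∧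
        (∀ A : Set Y, IsClosed A → ∀ y ∉ A, ∃ B ∈ F, y ∉ B ∧ A ⊆ B) ∧
        (∀ A ∈ F, ∀ B ∈ F, A ∩ B ∈ F) ∧
        (∀ A ∈ F, ∀ B ∈ F, Disjoint A B →
          Disjoint (closure (Subtype.val '' (f ⁻¹' A)))
            (closure (Subtype.val '' (f ⁻¹' B)))) := by
  constructor
  · rintro ⟨g, hg, hgx⟩
    refine ⟨{A | IsClosed A}, fun A hA => hA, fun A hA y hy => ⟨A, hA, hy, subset_rfl⟩,
      fun A hA B hB => hA.inter hB, fun A hA B hB hAB => ?_⟩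
    have h : ∀ C : Set Y, IsClosed C →
        closure (Subtype.val '' (f ⁻¹' C)) ⊆ g ⁻¹' C := by
      intro C hC
      apply closure_minimal _ (hC.preimage hg)
      rintro _ ⟨x, hx, rfl⟩
      simpa [hgx x] using hx
    exact (hAB.preimage g).mono (h A hA) (h B hB)
  · rintro ⟨F, hFc, hFb, hFi, hFd⟩
    have di : IsDenseInducing (Subtype.val : X → T) :=
      ⟨IsInducing.subtypeVal, hX.denseRange_val⟩
    -- cluster point claim
    have hcl : ∀ (t : T) (z : Y),
        ClusterPt z (map f (comap Subtype.val (𝓝 t))) →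
        ∀ U : Set Y, IsOpen U → z ∈ U →
        t ∈ closure (Subtype.val '' (f ⁻¹' U)) := by
      intro t z hz U hU hzU
      rw [mem_closure_iff_nhds]
      intro V hV
      have hS : f '' (Subtype.val ⁻¹' V) ∈ map f (comap Subtype.val (𝓝 t)) := by
        rw [mem_map]
        exact mem_of_superset (preimage_mem_comap hV) (Set.subset_preimage_image f _)
      obtain ⟨w, hwU, hwS⟩ := clusterPt_iff_nonempty.1 hz (hU.mem_nhds hzU) hS
      obtain ⟨x, hxV, rfl⟩ := hwS
      exact ⟨x, hxV, x, hwU, rfl⟩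
    have hconv : ∀ t : T, ∃ c : Y,
        Tendsto f (comap (Subtype.val : X → T) (𝓝 t)) (𝓝 c) := by
      intro t
      haveI := di.comap_nhds_neBot t
      obtain ⟨y, hy⟩ := exists_clusterPt_of_compactSpace
        (map f (comap Subtype.val (𝓝 t)))
      refine ⟨y, le_nhds_of_unique_clusterPt ?_⟩
      intro z hz
      by_contra hzy
      obtain ⟨A, hAF, B, hBF, hzA, hyB, hAB⟩ := aux_sep hFc hFb hFi hzy
      have htA : t ∈ closure (Subtype.val '' (f ⁻¹' A)) :=
        closure_mono (Set.image_mono (Set.preimage_mono interior_subset))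
          (hcl t z hz (interior A) isOpen_interior hzA)
      have htB : t ∈ closure (Subtype.val '' (f ⁻¹' B)) :=
        closure_mono (Set.image_mono (Set.preimage_mono interior_subset))
          (hcl t y hy (interior B) isOpen_interior hyB)
      exact Set.disjoint_left.1 (hFd A hAF B hBF hAB) htA htB
    exact ⟨di.extend f, di.continuous_extend hconv, fun x => di.extend_eq hf x⟩
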